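/- Weyl superdimension formula for osp(1|2n) at λ in the root lattice: for any weight λ in Q ⊗ C, the limit as t → 0 of Ã_{λ+ρ}(tρ^∨)/Ã_ρ(tρ^∨) equals Π_{α ∈ Δ⁺_{0,short}} (α | λ+ρ)/(α | ρ), where Ã_μ = Σ_{w∈W} (-1)^{ℓ̃(w)} e^{w(μ)-ρ} and ℓ̃(w) is the modified length counting short-root reflections. In the concrete coordinates this states: for v with v_m = ρ_m + c·u_m, ρ_m = m - 1/2, the limit of the alternating Weyl sum ratio equals Π_{1≤l<m≤n} (v_m² - v_l²)/(ρ_m² - ρ_l²). -/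

import Mathlib

open Filter

section WeylAux
open Finset



lemma card_sq_le_sum {β : Type*} [DecidableEq β] :
    ∀ s : Finset β, ∀ f : β → ℕ, Set.InjOn f s → s.card ^ 2 ≤ ∑ i ∈ s, (2 * f i + 1) := by
  intro s
  induction s using Finset.strongInduction with
  | _ s ih =>
    intro f hf
    rcases s.eq_empty_or_nonempty with rfl | hs
    · simp
    obtain ⟨a, ha, hmax⟩ := s.exists_max_image f hs
    have hcard : s.card ≤ f a + 1 := by
      have himg : s.image f ⊆ Finset.range (f a + 1) := by
        intro x hx
        simp only [Finset.mem_image] at hx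
        obtain ⟨b, hb, rfl⟩ := hx
        simp only [Finset.mem_range, Nat.lt_succ_iff]
        exact hmax b hb
      calc s.card = (s.image f).card := (Finset.card_image_of_injOn hf).symm
        _ ≤ (Finset.range (f a + 1)).card := Finset.card_le_card himg
        _ = f a + 1 := by simp
    have hIH := ih (s.erase a) (Finset.erase_ssubset ha) f
      (hf.mono (by exact_mod_cast Finset.erase_subset a s))
    rw [← Finset.add_sum_erase s _ ha]
    have hce : (s.erase a).card = s.card - 1 := Finset.card_erase_of_mem ha
    obtain ⟨d, hd⟩ : ∃ d, s.card = d + 1 :=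
      ⟨s.card - 1, (Nat.succ_pred_eq_of_pos (Finset.card_pos.2 hs)).symm⟩
    rw [hce, hd] at hIH
    simp only [Nat.add_sub_cancel] at hIH
    rw [hd]
    have hda : d ≤ f a := by omega
    nlinarith [hIH, hda]


noncomputable def Dm (n : ℕ) (ρ μ : Fin n → ℝ) (m : ℕ) : ℝ :=
  ∑ σ : Equiv.Perm (Fin n), ∑ ε : Fin n → Bool,
    ((Equiv.Perm.sign σ : ℤ) : ℝ) * (∑ j, (if ε j then (-1:ℝ) else 1) * μ j * ρ (σ j)) ^ m

lemma sum_sign_pow (n : ℕ) (kk : Fin n → ℕ) :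
    (∑ ε : Fin n → Bool, ∏ j, (if ε j then (-1:ℝ) else 1) ^ kk j)
      = if ∀ j, Even (kk j) then (2:ℝ)^n else 0 := by
  have h1 : (∑ ε : Fin n → Bool, ∏ j, (if ε j then (-1:ℝ) else 1) ^ kk j)
      = ∏ j, ∑ b : Bool, (if b then (-1:ℝ) else 1) ^ kk j := by
    rw [← Finset.sum_prod_piFinset, Fintype.piFinset_univ]
  rw [h1]
  have h2 : ∀ j : Fin n, (∑ b : Bool, (if b then (-1:ℝ) else 1) ^ kk j)
      = if Even (kk j) then (2:ℝ) else 0 := by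
    intro j
    rw [Fintype.sum_bool]
    by_cases h : Even (kk j)
    · rw [if_pos h, if_pos, if_neg (by simp), h.neg_one_pow, one_pow]; norm_num; simp
    · rw [if_neg h, if_pos, if_neg (by simp), (Nat.not_even_iff_odd.1 h).neg_one_pow, one_pow]
      norm_num; simp
  simp_rw [h2]
  by_cases h : ∀ j, Even (kk j)
  · rw [if_pos h, Finset.prod_congr rfl (fun j _ => if_pos (h j)), Finset.prod_const]
    simp
  · rw [if_neg h]
    push_neg at h
    obtain ⟨j0, hj0⟩ := h
    exact Finset.prod_eq_zero (Finset.mem_univ j0) (if_neg hj0)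

lemma sum_sign_prod (n : ℕ) (ρ : Fin n → ℝ) (kk : Fin n → ℕ) :
    (∑ σ : Equiv.Perm (Fin n), ((Equiv.Perm.sign σ : ℤ) : ℝ) * ∏ j, ρ (σ j) ^ kk j)
      = (Matrix.of fun i j : Fin n => ρ i ^ kk j).det := by
  rw [Matrix.det_apply]
  refine Finset.sum_congr rfl fun σ _ => ?_
  simp [Units.smul_def, zsmul_eq_mul]

lemma sum_factor {α β : Type*} [Fintype α] [Fintype β] (M P : ℝ) (E : α → ℝ) (S : β → ℝ) :
    (∑ ε : α, ∑ σ : β, M * (E ε * (P * S σ))) = M * ((∑ ε, E ε) * (P * ∑ σ, S σ)) := by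
  have h : ∀ ε : α, (∑ σ : β, M * (E ε * (P * S σ))) = E ε * (M * P * ∑ σ, S σ) := by
    intro ε
    rw [Finset.mul_sum, Finset.mul_sum]
    exact Finset.sum_congr rfl fun σ _ => by ring
  simp_rw [h]
  rw [← Finset.sum_mul]
  ring

lemma Dm_eq (n : ℕ) (ρ μ : Fin n → ℝ) (m : ℕ) :
    Dm n ρ μ m = ∑ kk ∈ Finset.piAntidiag Finset.univ m,
      (Nat.multinomial Finset.univ kk : ℝ) *
        ((if ∀ j, Even (kk j) then (2:ℝ)^n else 0) *
          ((∏ j, μ j ^ kk j) * (Matrix.of fun i j : Fin n => ρ i ^ kk j).det)) := by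
  unfold Dm
  have key : ∀ σ : Equiv.Perm (Fin n), ∀ ε : Fin n → Bool,
      ((Equiv.Perm.sign σ : ℤ) : ℝ) * (∑ j, (if ε j then (-1:ℝ) else 1) * μ j * ρ (σ j)) ^ m
        = ∑ kk ∈ Finset.piAntidiag Finset.univ m,
            (Nat.multinomial Finset.univ kk : ℝ) *
              ((∏ j, (if ε j then (-1:ℝ) else 1) ^ kk j) *
               ((∏ j, μ j ^ kk j) *
                (((Equiv.Perm.sign σ : ℤ) : ℝ) * ∏ j, ρ (σ j) ^ kk j))) := by
    intro σ ε
    rw [Finset.sum_pow_eq_sum_piAntidiag, Finset.mul_sum]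
    refine Finset.sum_congr rfl fun kk _ => ?_
    simp_rw [mul_pow]
    rw [Finset.prod_mul_distrib, Finset.prod_mul_distrib]
    ring
  simp_rw [key]
  rw [Finset.sum_comm]
  have swap2 : ∀ ε : Fin n → Bool,
      (∑ σ : Equiv.Perm (Fin n), ∑ kk ∈ Finset.piAntidiag Finset.univ m,
        (Nat.multinomial Finset.univ kk : ℝ) *
          ((∏ j, (if ε j then (-1:ℝ) else 1) ^ kk j) *
           ((∏ j, μ j ^ kk j) *
            (((Equiv.Perm.sign σ : ℤ) : ℝ) * ∏ j, ρ (σ j) ^ kk j))))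
      = ∑ kk ∈ Finset.piAntidiag Finset.univ m, ∑ σ : Equiv.Perm (Fin n),
        (Nat.multinomial Finset.univ kk : ℝ) *
          ((∏ j, (if ε j then (-1:ℝ) else 1) ^ kk j) *
           ((∏ j, μ j ^ kk j) *
            (((Equiv.Perm.sign σ : ℤ) : ℝ) * ∏ j, ρ (σ j) ^ kk j))) := fun ε =>
    Finset.sum_comm
  simp_rw [swap2]
  rw [Finset.sum_comm]
  refine Finset.sum_congr rfl fun kk _ => ?_
  rw [← sum_sign_pow n kk, ← sum_sign_prod n ρ kk]
  exact sum_factor _ _ _ _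

lemma even_inj_sum_ge {n : ℕ} (kk : Fin n → ℕ) (he : ∀ j, Even (kk j))
    (hinj : Function.Injective kk) : n * n ≤ (∑ j, kk j) + n := by
  have h2 : ∀ j, 2 * (kk j / 2) = kk j := by
    intro j
    obtain ⟨r, hr⟩ := he j
    omega
  have hinj' : Set.InjOn (fun j => kk j / 2) (Finset.univ : Finset (Fin n)) := by
    intro a _ b _ hab
    apply hinj
    have := h2 a; have := h2 b
    simp only at hab
    omega
  have := card_sq_le_sum Finset.univ (fun j => kk j / 2) hinj'
  simp only [Finset.card_univ, Fintype.card_fin] at this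
  have hs : (∑ j, (2 * (kk j / 2) + 1)) = (∑ j, kk j) + n := by
    rw [Finset.sum_add_distrib]
    simp only [Finset.sum_const, Finset.card_univ, Fintype.card_fin, smul_eq_mul, mul_one]
    congr 1
    exact Finset.sum_congr rfl fun j _ => h2 j
  rw [hs] at this
  calc n * n = n ^ 2 := (sq n).symm
    _ ≤ _ := this

lemma Dm_vanish (n : ℕ) (ρ μ : Fin n → ℝ) (m : ℕ) (hm : m < n * (n - 1)) :
    Dm n ρ μ m = 0 := by
  rw [Dm_eq]
  refine Finset.sum_eq_zero fun kk hkk => ?_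
  by_cases he : ∀ j, Even (kk j)
  · rw [Finset.mem_piAntidiag] at hkk
    by_cases hinj : Function.Injective kk
    · exfalso
      have := even_inj_sum_ge kk he hinj
      rw [hkk.1] at this
      have hn1 : 1 ≤ n := by
        by_contra h
        interval_cases n <;> omega
      have : n * (n - 1) + n = n * n := by
        cases n with
        | zero => omega
        | succ d => simp [Nat.succ_sub_one]; ring
      omega
    · rw [Function.not_injective_iff] at hinj
      obtain ⟨j1, j2, heq, hne⟩ := hinj
      have hdet : (Matrix.of fun i j : Fin n => ρ i ^ kk j).det = 0 :=
        Matrix.det_zero_of_column_eq hne (fun i => by simp [heq])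
      rw [hdet]
      ring
  · rw [if_neg he]
    ring

lemma Dm_top (n : ℕ) (ρ μ : Fin n → ℝ) :
    Dm n ρ μ (n * (n - 1)) =
      (Nat.multinomial Finset.univ (fun j : Fin n => 2 * (j : ℕ)) : ℝ) * 2 ^ n *
        (∏ i : Fin n, ∏ j ∈ Finset.Ioi i, ((ρ j) ^ 2 - (ρ i) ^ 2)) *
        (∏ i : Fin n, ∏ j ∈ Finset.Ioi i, ((μ j) ^ 2 - (μ i) ^ 2)) := by
  rw [Dm_eq]
  set emb : Equiv.Perm (Fin n) → (Fin n → ℕ) := fun τ j => 2 * ((τ j : Fin n) : ℕ) with hemb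
  have hsum2 : ∀ τ : Equiv.Perm (Fin n), (∑ j, emb τ j) = n * (n - 1) := by
    intro τ
    have h1 : (∑ j, emb τ j) = ∑ j : Fin n, 2 * (j : ℕ) :=
      Equiv.sum_comp τ (fun j : Fin n => 2 * (j : ℕ))
    rw [h1, ← Finset.mul_sum, Fin.sum_univ_eq_sum_range (fun i => (i : ℕ))]
    have := Finset.sum_range_id_mul_two n
    omega
  have hsub : (Finset.univ.image emb) ⊆ Finset.piAntidiag Finset.univ (n * (n - 1)) := by
    intro kk hkk
    rw [Finset.mem_image] at hkk
    obtain ⟨τ, _, rfl⟩ := hkk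
    rw [Finset.mem_piAntidiag]
    exact ⟨hsum2 τ, fun i _ => Finset.mem_univ i⟩
  have hzero : ∀ kk ∈ Finset.piAntidiag Finset.univ (n * (n - 1)),
      kk ∉ Finset.univ.image emb →
      (Nat.multinomial Finset.univ kk : ℝ) *
        ((if ∀ j, Even (kk j) then (2:ℝ)^n else 0) *
          ((∏ j, μ j ^ kk j) * (Matrix.of fun i j : Fin n => ρ i ^ kk j).det)) = 0 := by
    intro kk hkk hnot
    rw [Finset.mem_piAntidiag] at hkk
    by_cases he : ∀ j, Even (kk j)
    · by_cases hinj : Function.Injective kk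
      · exfalso
        apply hnot
        rw [Finset.mem_image]
        have h2 : ∀ j, 2 * (kk j / 2) = kk j := by
          intro j; obtain ⟨r, hr⟩ := he j; omega
        have hlt : ∀ j, kk j / 2 < n := by
          intro j0
          by_contra hge
          push_neg at hge
          have hIJ : Set.InjOn (fun j => kk j / 2) ((Finset.univ : Finset (Fin n)).erase j0) := by
            intro a _ b _ hab
            apply hinj
            have := h2 a; have := h2 b
            simp only at hab
            omega
          have hL := card_sq_le_sum ((Finset.univ : Finset (Fin n)).erase j0)
            (fun j => kk j / 2) hIJ
          have hce : ((Finset.univ : Finset (Fin n)).erase j0).card = n - 1 := by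
            rw [Finset.card_erase_of_mem (Finset.mem_univ j0)]
            simp
          rw [hce] at hL
          have htot : (∑ j, (2 * (kk j / 2) + 1)) = n * (n - 1) + n := by
            rw [Finset.sum_add_distrib]
            simp only [Finset.sum_const, Finset.card_univ, Fintype.card_fin, smul_eq_mul, mul_one]
            congr 1
            rw [← hkk.1]
            exact Finset.sum_congr rfl fun j _ => h2 j
          have hsplit : (∑ j, (2 * (kk j / 2) + 1))
              = (2 * (kk j0 / 2) + 1) + ∑ j ∈ (Finset.univ : Finset (Fin n)).erase j0,
                  (2 * (kk j / 2) + 1) :=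
            (Finset.add_sum_erase _ _ (Finset.mem_univ j0)).symm
          have hn1 : 1 ≤ n := j0.pos
          have hsq : n * (n - 1) + n = n * n := by
            cases n with
            | zero => omega
            | succ d => simp [Nat.succ_sub_one]; ring
          have hL' : (n - 1) ^ 2 ≤ ∑ j ∈ (Finset.univ : Finset (Fin n)).erase j0,
              (2 * (kk j / 2) + 1) := by simpa using hL
          have hfin : (2 * (kk j0 / 2) + 1) + ∑ j ∈ (Finset.univ : Finset (Fin n)).erase j0,
              (2 * (kk j / 2) + 1) = n * (n - 1) + n := by
            rw [← hsplit, htot]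
          have key3 : (n - 1) ^ 2 + 2 * n = n * n + 1 := by
            cases n with
            | zero => omega
            | succ d => simp [Nat.succ_sub_one]; ring
          omega
        set e : Fin n → Fin n := fun j => ⟨kk j / 2, hlt j⟩ with hedef
        have heinj : Function.Injective e := by
          intro a b hab
          apply hinj
          have := h2 a; have := h2 b
          have : kk a / 2 = kk b / 2 := congrArg Fin.val hab
          omega
        have hbij := Finite.injective_iff_bijective.1 heinj
        refine ⟨Equiv.ofBijective e hbij, Finset.mem_univ _, ?_⟩
        funext j
        show 2 * ((Equiv.ofBijective e hbij) j : ℕ) = kk j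
        rw [Equiv.ofBijective_apply]
        show 2 * (kk j / 2) = kk j
        exact h2 j
      · rw [Function.not_injective_iff] at hinj
        obtain ⟨j1, j2, heq, hne⟩ := hinj
        have hdet : (Matrix.of fun i j : Fin n => ρ i ^ kk j).det = 0 :=
          Matrix.det_zero_of_column_eq hne (fun i => by simp [heq])
        rw [hdet]; ring
    · rw [if_neg he]; ring
  rw [← Finset.sum_subset hsub hzero]
  rw [Finset.sum_image (by
    intro τ _ τ' _ h
    ext j
    have := congrFun h j
    simp only [hemb] at this
    omega)]
  have hmult : ∀ τ : Equiv.Perm (Fin n),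
      Nat.multinomial Finset.univ (emb τ)
        = Nat.multinomial Finset.univ (fun j : Fin n => 2 * (j : ℕ)) := by
    intro τ
    have h1 : (∑ i : Fin n, 2 * ((τ i : Fin n) : ℕ)) = ∑ j : Fin n, 2 * (j : ℕ) :=
      Equiv.sum_comp τ (fun j : Fin n => 2 * (j : ℕ))
    have h2 : (∏ i : Fin n, Nat.factorial (2 * ((τ i : Fin n) : ℕ)))
        = ∏ j : Fin n, Nat.factorial (2 * (j : ℕ)) :=
      Equiv.prod_comp τ (fun j : Fin n => Nat.factorial (2 * (j : ℕ)))
    simp only [hemb]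
    unfold Nat.multinomial
    rw [h1, h2]
  have hdetp : ∀ τ : Equiv.Perm (Fin n),
      (Matrix.of fun i j : Fin n => ρ i ^ (emb τ j)).det
        = ((Equiv.Perm.sign τ : ℤ) : ℝ) * (Matrix.vandermonde (fun i => ρ i ^ 2)).det := by
    intro τ
    have h : (Matrix.of fun i j : Fin n => ρ i ^ (emb τ j))
        = (Matrix.vandermonde (fun i => ρ i ^ 2)).submatrix id τ := by
      ext i j
      simp [Matrix.vandermonde_apply, hemb, pow_mul]
    rw [h, Matrix.det_permute']
  have hterm : ∀ τ : Equiv.Perm (Fin n),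
      (Nat.multinomial Finset.univ (emb τ) : ℝ) *
        ((if ∀ j, Even (emb τ j) then (2:ℝ)^n else 0) *
          ((∏ j, μ j ^ emb τ j) * (Matrix.of fun i j : Fin n => ρ i ^ emb τ j).det))
      = ((Nat.multinomial Finset.univ (fun j : Fin n => 2 * (j : ℕ)) : ℝ) * 2 ^ n *
          (Matrix.vandermonde (fun i => ρ i ^ 2)).det) *
        (((Equiv.Perm.sign τ : ℤ) : ℝ) * ∏ j, (μ j ^ 2) ^ ((τ j : Fin n) : ℕ)) := by
    intro τ
    have hev : ∀ j, Even (emb τ j) := by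
      intro j
      simp only [hemb]
      exact even_two_mul _
    rw [hmult, hdetp, if_pos hev]
    have hprod : (∏ j, μ j ^ emb τ j) = ∏ j, (μ j ^ 2) ^ ((τ j : Fin n) : ℕ) :=
      Finset.prod_congr rfl fun j _ => by simp only [hemb]; rw [pow_mul]
    rw [hprod]
    ring
  simp_rw [hterm]
  rw [← Finset.mul_sum]
  have hvdm : (∑ τ : Equiv.Perm (Fin n),
        ((Equiv.Perm.sign τ : ℤ) : ℝ) * ∏ j, (μ j ^ 2) ^ ((τ j : Fin n) : ℕ))
      = (Matrix.vandermonde (fun i => μ i ^ 2)).det := by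
    rw [← Matrix.det_transpose, Matrix.det_apply]
    refine Finset.sum_congr rfl fun τ _ => ?_
    simp [Units.smul_def, Matrix.vandermonde_apply]
  rw [hvdm, Matrix.det_vandermonde, Matrix.det_vandermonde]

lemma tendsto_aux {ι : Type*} [Fintype ι] (s c : ι → ℝ) (N : ℕ)
    (h0 : ∀ m, m < N → (∑ i, s i * c i ^ m) = 0) :
    Tendsto (fun t : ℝ => (∑ i, s i * Real.exp (t * c i)) / t ^ N)
      (nhdsWithin 0 {t : ℝ | t ≠ 0})
      (nhds ((∑ i, s i * c i ^ N) / (N.factorial : ℝ))) := by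
  set A : ℝ := (∑ i, s i * c i ^ N) / (N.factorial : ℝ) with hA
  set R : ℝ := 1 + ∑ i, |c i| with hR
  have hRpos : 0 < R := by
    have : 0 ≤ ∑ i, |c i| := Finset.sum_nonneg fun i _ => abs_nonneg _
    rw [hR]; linarith
  have hcR : ∀ i, |c i| ≤ R := by
    intro i
    have h1 : |c i| ≤ ∑ j, |c j| :=
      Finset.single_le_sum (fun j _ => abs_nonneg (c j)) (Finset.mem_univ i)
    rw [hR]; linarith
  set B : ℝ := (((N + 1).succ : ℕ) : ℝ) / ((((N + 1).factorial : ℕ) : ℝ) * (((N + 1) : ℕ) : ℝ)) with hB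
  set C : ℝ := ∑ i, |s i| * (|c i| ^ (N + 1) * B) with hC
  -- sum of truncated Taylor series
  have hsum : ∀ t : ℝ,
      (∑ i, s i * (∑ m ∈ Finset.range (N + 1), (t * c i) ^ m / (m.factorial : ℝ)))
        = t ^ N * A := by
    intro t
    have h1 : ∀ i, s i * (∑ m ∈ Finset.range (N + 1), (t * c i) ^ m / (m.factorial : ℝ))
        = ∑ m ∈ Finset.range (N + 1), (t ^ m / (m.factorial : ℝ)) * (s i * c i ^ m) := by
      intro i
      rw [Finset.mul_sum]
      refine Finset.sum_congr rfl fun m _ => ?_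
      rw [mul_pow]; ring
    simp_rw [h1]
    rw [Finset.sum_comm]
    have h2 : ∀ m ∈ Finset.range (N + 1),
        (∑ i, (t ^ m / (m.factorial : ℝ)) * (s i * c i ^ m))
          = (t ^ m / (m.factorial : ℝ)) * (∑ i, s i * c i ^ m) := fun m _ =>
      (Finset.mul_sum _ _ _).symm
    rw [Finset.sum_congr rfl h2]
    rw [Finset.sum_eq_single_of_mem N (Finset.self_mem_range_succ N)
      (fun m hm hne => by
        rw [h0 m (by
          rw [Finset.mem_range] at hm
          omega), mul_zero])]
    rw [hA]; ring
  have key : ∀ t : ℝ, |t| ≤ 1 / R →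
      |(∑ i, s i * Real.exp (t * c i)) - t ^ N * A| ≤ C * |t| ^ (N + 1) := by
    intro t ht
    rw [← hsum t, ← Finset.sum_sub_distrib]
    have hterm : ∀ i, s i * Real.exp (t * c i)
        - s i * (∑ m ∈ Finset.range (N + 1), (t * c i) ^ m / (m.factorial : ℝ))
        = s i * (Real.exp (t * c i) - ∑ m ∈ Finset.range (N + 1), (t * c i) ^ m / (m.factorial : ℝ)) := by
      intro i; ring
    calc |∑ i, (s i * Real.exp (t * c i)
          - s i * (∑ m ∈ Finset.range (N + 1), (t * c i) ^ m / (m.factorial : ℝ)))|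
        ≤ ∑ i, |s i * Real.exp (t * c i)
          - s i * (∑ m ∈ Finset.range (N + 1), (t * c i) ^ m / (m.factorial : ℝ))| :=
          Finset.abs_sum_le_sum_abs _ _
      _ ≤ C * |t| ^ (N + 1) := by
          rw [hC, Finset.sum_mul]
          refine Finset.sum_le_sum fun i _ => ?_
          rw [hterm i, abs_mul]
          have htc : |t * c i| ≤ 1 := by
            rw [abs_mul]
            calc |t| * |c i| ≤ (1 / R) * R :=
              mul_le_mul ht (hcR i) (abs_nonneg _) (by positivity)
            _ = 1 := by field_simp
          have hexp := Real.exp_bound htc (Nat.succ_pos N)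
          have h3 : |Real.exp (t * c i)
              - ∑ m ∈ Finset.range (N + 1), (t * c i) ^ m / (m.factorial : ℝ)|
              ≤ |t * c i| ^ (N + 1) * B := hexp
          calc |s i| * |Real.exp (t * c i)
                - ∑ m ∈ Finset.range (N + 1), (t * c i) ^ m / (m.factorial : ℝ)|
              ≤ |s i| * (|t * c i| ^ (N + 1) * B) :=
                mul_le_mul_of_nonneg_left h3 (abs_nonneg _)
            _ = |s i| * (|c i| ^ (N + 1) * B) * |t| ^ (N + 1) := by
                rw [abs_mul, mul_pow]; ring
  -- conclude
  have hdiff : Tendsto (fun t : ℝ => (∑ i, s i * Real.exp (t * c i)) / t ^ N - A)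
      (nhdsWithin 0 {t : ℝ | t ≠ 0}) (nhds 0) := by
    refine squeeze_zero_norm' (a := fun t : ℝ => C * |t|) ?_ ?_
    · have h1 : ∀ᶠ t in nhdsWithin (0:ℝ) {t : ℝ | t ≠ 0}, |t| ≤ 1 / R := by
        apply eventually_nhdsWithin_of_eventually_nhds
        have : ∀ᶠ t in nhds (0:ℝ), dist t 0 < 1 / R :=
          Metric.ball_mem_nhds 0 (by positivity)
        filter_upwards [this] with t ht
        rw [Real.dist_eq, sub_zero] at ht
        exact ht.le
      have h2 : ∀ᶠ t in nhdsWithin (0:ℝ) {t : ℝ | t ≠ 0}, t ≠ 0 :=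
        eventually_mem_nhdsWithin
      filter_upwards [h1, h2] with t ht hne
      have htN : |t| ^ N ≠ 0 := pow_ne_zero _ (abs_ne_zero.2 hne)
      have hCnn : 0 ≤ C := by
        rw [hC]
        refine Finset.sum_nonneg fun i _ => ?_
        have hBnn : 0 ≤ B := by rw [hB]; positivity
        positivity
      rw [Real.norm_eq_abs]
      have heq : (∑ i, s i * Real.exp (t * c i)) / t ^ N - A
          = ((∑ i, s i * Real.exp (t * c i)) - t ^ N * A) / t ^ N := by
        field_simp
      rw [heq, abs_div, abs_pow]
      rw [div_le_iff₀ (by positivity)]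
      calc |(∑ i, s i * Real.exp (t * c i)) - t ^ N * A| ≤ C * |t| ^ (N + 1) := key t ht
        _ = C * |t| * |t| ^ N := by ring
    · have : Tendsto (fun t : ℝ => C * |t|) (nhds (0:ℝ)) (nhds (C * |0|)) :=
        (continuous_const.mul continuous_abs).tendsto 0
      simp only [abs_zero, mul_zero] at this
      exact this.mono_left nhdsWithin_le_nhds
  have := hdiff.add_const A
  simpa using this

lemma prod_pairs {M : Type*} [CommMonoid M] {n : ℕ} (F : Fin n → Fin n → M) :
    (∏ p ∈ Finset.univ.filter (fun p : Fin n × Fin n => p.1 < p.2), F p.1 p.2)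
      = ∏ i : Fin n, ∏ j ∈ Finset.Ioi i, F i j := by
  rw [Finset.prod_sigma']
  refine Finset.prod_nbij' (fun p => ⟨p.1, p.2⟩) (fun x => (x.1, x.2)) ?_ ?_ ?_ ?_ ?_ <;>
    simp [Finset.mem_sigma, Finset.mem_filter]


end WeylAux

section WeylAux2
open Finset

/-- The alternating Weyl sum `Σ_{w ∈ W} sgn₀(w) e^{t⟨w(μ), ρW⟩}` over the group `W` of
signed permutations of `{1,…,n}` (the Weyl group of `sp(2n)`), where `sgn₀(w)` is the sign
of the underlying (unsigned) permutation of `w`; parametrizing `w` by a pair `(σ, ε)` of a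
permutation and a sign flip, the pairing is `⟨w(μ), ρW⟩ = Σ_j ε_j μ_j ρW_{σ(j)}`. -/
noncomputable def signedWeylSum (n : ℕ) (ρW : Fin n → ℝ) (μ : Fin n → ℝ) (t : ℝ) : ℝ :=
  ∑ σ : Equiv.Perm (Fin n), ∑ ε : Fin n → Bool,
    ((Equiv.Perm.sign σ : ℤ) : ℝ) *
      Real.exp (t * ∑ j, (if ε j then -1 else 1) * μ j * ρW (σ j))

/-- Weyl superdimension formula for `osp(1|2n)` in concrete coordinates,
cf. Eq. (A.4) of the paper: with `ρ_m = m - 1/2` and `v_m = ρ_m + c·u_m`, `c = 2(n+k)+1`,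
`u ∈ ℤⁿ`, the ratio `Ã_{λ+ρ}(tρ^∨)/Ã_ρ(tρ^∨)` of alternating Weyl sums tends, as `t → 0`,
to the product over short positive even roots
`∏_{α ∈ Δ⁺_{0,short}} (α|λ+ρ)/(α|ρ) = ∏_{1≤l<m≤n} (v_m² - v_l²)/(ρ_m² - ρ_l²)`. -/
theorem weyl_superdimension_limit (n k : ℕ) (hn : 0 < n) (hk : 0 < k)
    (c : ℝ) (hc : c = 2 * (n + k) + 1)
    (ρW : Fin n → ℝ) (hρ : ∀ m, ρW m = (m : ℕ) + 1 / 2)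
    (u : Fin n → ℤ)
    (v : Fin n → ℝ) (hv : ∀ m, v m = ρW m + c * u m) :
    Tendsto (fun t : ℝ => signedWeylSum n ρW v t / signedWeylSum n ρW ρW t)
      (nhdsWithin 0 {t : ℝ | t ≠ 0})
      (nhds (∏ p ∈ Finset.univ.filter (fun p : Fin n × Fin n => p.1 < p.2),
        ((v p.2) ^ 2 - (v p.1) ^ 2) / ((ρW p.2) ^ 2 - (ρW p.1) ^ 2))) := by
  classical
  set N := n * (n - 1) with hN
  -- pack signedWeylSum and Dm as sums over pairs
  have hpack : ∀ μ : Fin n → ℝ, ∀ t : ℝ, signedWeylSum n ρW μ t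
      = ∑ p : Equiv.Perm (Fin n) × (Fin n → Bool),
          ((Equiv.Perm.sign p.1 : ℤ) : ℝ) *
            Real.exp (t * ∑ j, (if p.2 j then -1 else 1) * μ j * ρW (p.1 j)) := by
    intro μ t
    rw [signedWeylSum, Fintype.sum_prod_type]
  have hpackD : ∀ μ : Fin n → ℝ, ∀ m : ℕ, Dm n ρW μ m
      = ∑ p : Equiv.Perm (Fin n) × (Fin n → Bool),
          ((Equiv.Perm.sign p.1 : ℤ) : ℝ) *
            (∑ j, (if p.2 j then -1 else 1) * μ j * ρW (p.1 j)) ^ m := by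
    intro μ m
    rw [Dm, Fintype.sum_prod_type]
  have haux : ∀ μ : Fin n → ℝ,
      Tendsto (fun t : ℝ => signedWeylSum n ρW μ t / t ^ N)
        (nhdsWithin 0 {t : ℝ | t ≠ 0}) (nhds (Dm n ρW μ N / (N.factorial : ℝ))) := by
    intro μ
    have h0 : ∀ m, m < N →
        (∑ p : Equiv.Perm (Fin n) × (Fin n → Bool),
          ((Equiv.Perm.sign p.1 : ℤ) : ℝ) *
            (∑ j, (if p.2 j then -1 else 1) * μ j * ρW (p.1 j)) ^ m) = 0 := by
      intro m hm
      rw [← hpackD μ m]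
      exact Dm_vanish n ρW μ m hm
    have h := tendsto_aux
      (fun p : Equiv.Perm (Fin n) × (Fin n → Bool) => ((Equiv.Perm.sign p.1 : ℤ) : ℝ))
      (fun p : Equiv.Perm (Fin n) × (Fin n → Bool) =>
        ∑ j, (if p.2 j then -1 else 1) * μ j * ρW (p.1 j)) N h0
    rw [← hpackD μ N] at h
    exact h.congr (fun t => by rw [← hpack μ t])
  have hv1 := haux v
  have hv2 := haux ρW
  set M0 : ℝ := (Nat.multinomial Finset.univ (fun j : Fin n => 2 * (j : ℕ)) : ℝ) with hM0def
  set Vρ : ℝ := ∏ i : Fin n, ∏ j ∈ Finset.Ioi i, ((ρW j) ^ 2 - (ρW i) ^ 2) with hVρ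
  set Vv : ℝ := ∏ i : Fin n, ∏ j ∈ Finset.Ioi i, ((v j) ^ 2 - (v i) ^ 2) with hVv
  have hDv : Dm n ρW v N = M0 * 2 ^ n * Vρ * Vv := Dm_top n ρW v
  have hDρ : Dm n ρW ρW N = M0 * 2 ^ n * Vρ * Vρ := Dm_top n ρW ρW
  have hρmono : ∀ i j : Fin n, i < j → (ρW i) ^ 2 < (ρW j) ^ 2 := by
    intro i j hij
    have h0i : (0:ℝ) ≤ ρW i := by rw [hρ]; positivity
    have hij' : ρW i < ρW j := by
      rw [hρ, hρ]
      have : ((i : ℕ) : ℝ) < ((j : ℕ) : ℝ) := by exact_mod_cast (Fin.lt_def.1 hij)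
      linarith
    exact pow_lt_pow_left₀ hij' h0i (by norm_num)
  have hVρpos : 0 < Vρ := Finset.prod_pos fun i _ => Finset.prod_pos fun j hj =>
    sub_pos.2 (hρmono i j (Finset.mem_Ioi.1 hj))
  have hM0pos : (0:ℝ) < M0 := by
    rw [hM0def]
    exact_mod_cast Nat.multinomial_pos _ _
  have hNfac : (0:ℝ) < (N.factorial : ℝ) := by exact_mod_cast N.factorial_pos
  have h2n : (0:ℝ) < 2 ^ n := by positivity
  have hBne : Dm n ρW ρW N / (N.factorial : ℝ) ≠ 0 := by
    rw [hDρ]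
    exact ne_of_gt (div_pos (mul_pos (mul_pos (mul_pos hM0pos h2n) hVρpos) hVρpos) hNfac)
  have hratio := hv1.div hv2 hBne
  have heq : (fun t : ℝ => (signedWeylSum n ρW v t / t ^ N) / (signedWeylSum n ρW ρW t / t ^ N))
      =ᶠ[nhdsWithin 0 {t : ℝ | t ≠ 0}]
        (fun t => signedWeylSum n ρW v t / signedWeylSum n ρW ρW t) := by
    filter_upwards [eventually_mem_nhdsWithin] with t ht
    have ht' : t ≠ 0 := ht
    have htN : (t : ℝ) ^ N ≠ 0 := pow_ne_zero _ ht'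
    rcases eq_or_ne (signedWeylSum n ρW ρW t) 0 with h | h
    · simp [h]
    · field_simp
  have hfinal := hratio.congr' heq
  have hval : (Dm n ρW v N / (N.factorial : ℝ)) / (Dm n ρW ρW N / (N.factorial : ℝ))
      = ∏ p ∈ Finset.univ.filter (fun p : Fin n × Fin n => p.1 < p.2),
          ((v p.2) ^ 2 - (v p.1) ^ 2) / ((ρW p.2) ^ 2 - (ρW p.1) ^ 2) := by
    rw [hDv, hDρ]
    rw [prod_pairs (F := fun i j : Fin n => ((v j) ^ 2 - (v i) ^ 2) / ((ρW j) ^ 2 - (ρW i) ^ 2))]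
    simp only [Finset.prod_div_distrib]
    rw [← hVv, ← hVρ]
    have h1 : M0 ≠ 0 := ne_of_gt hM0pos
    have h2 : Vρ ≠ 0 := ne_of_gt hVρpos
    have h3 : (2:ℝ) ^ n ≠ 0 := ne_of_gt h2n
    have h4 : (N.factorial : ℝ) ≠ 0 := ne_of_gt hNfac
    field_simp
  rw [← hval]
  exact hfinal

end WeylAux2
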